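/- For every θ ∈ [0,1] and every integer ℓ ≥ 1, if R ~ Binomial(ℓ-1, θ), then E[D_B(θ ‖ (R+1)/(ℓ+1))] ≤ 4/ℓ. -/

import Mathlib

/-- Binary relative entropy `D_B(p ‖ q)` (KL divergence between `Bernoulli p` and
`Bernoulli q`, in bits), with the convention `0 · log₂(0/q) = 0`. -/
noncomputable def binKL (p q : ℝ) : ℝ :=
  p * Real.logb 2 (p / q) + (1 - p) * Real.logb 2 ((1 - p) / (1 - q))

lemma termA (p q : ℝ) (hp : 0 ≤ p) (hq : 0 < q) :
    p * Real.log (p / q) ≤ p ^ 2 / q - p := by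
  rcases eq_or_lt_of_le hp with h | h
  · simp [← h]
  · have hpq : 0 < p / q := div_pos h hq
    have hlog := Real.log_le_sub_one_of_pos hpq
    calc p * Real.log (p / q) ≤ p * (p / q - 1) := by nlinarith
      _ = p ^ 2 / q - p := by ring

lemma binKL_le (p q : ℝ) (hp0 : 0 ≤ p) (hp1 : p ≤ 1) (hq0 : 0 < q) (hq1 : q < 1) :
    binKL p q ≤ (p ^ 2 / q + (1 - p) ^ 2 / (1 - q) - 1) / Real.log 2 := by
  have hA := termA p q hp0 hq0
  have hB := termA (1 - p) (1 - q) (by linarith) (by linarith)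
  have hlog : 0 < Real.log 2 := Real.log_pos one_lt_two
  unfold binKL
  rw [Real.logb, Real.logb]
  have heq : p * (Real.log (p / q) / Real.log 2)
      + (1 - p) * (Real.log ((1 - p) / (1 - q)) / Real.log 2)
      = (p * Real.log (p / q) + (1 - p) * Real.log ((1 - p) / (1 - q))) / Real.log 2 := by
    ring
  rw [heq]
  gcongr
  linarith

lemma L1 (x y : ℝ) (hx : 0 ≤ x) (hy : 0 ≤ y) (n : ℕ) :
    ∑ k ∈ Finset.range (n + 1),
      (n.choose k : ℝ) * x ^ k * y ^ (n - k) * (x / ((k : ℝ) + 1))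
      ≤ (x + y) ^ (n + 1) / ((n : ℝ) + 1) := by
  have hrw : ∀ k ∈ Finset.range (n + 1),
      (n.choose k : ℝ) * x ^ k * y ^ (n - k) * (x / ((k : ℝ) + 1))
      = x ^ (k + 1) * y ^ ((n + 1) - (k + 1)) * (((n + 1).choose (k + 1) : ℝ)) / ((n : ℝ) + 1) := by
    intro k hk
    have hc : ((n + 1 : ℕ) : ℝ) * (n.choose k : ℝ)
        = (((n + 1).choose (k + 1) : ℕ) : ℝ) * ((k + 1 : ℕ) : ℝ) := by
      exact_mod_cast congrArg (Nat.cast : ℕ → ℝ) (Nat.add_one_mul_choose_eq n k)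
    push_cast at hc
    have hk1 : ((k : ℝ) + 1) ≠ 0 := by positivity
    have hn1 : ((n : ℝ) + 1) ≠ 0 := by positivity
    rw [Nat.succ_sub_succ]
    field_simp
    linear_combination (x ^ (k + 1) * y ^ (n - k)) * hc
  rw [Finset.sum_congr rfl hrw, ← Finset.sum_div]
  gcongr
  rw [add_pow]
  conv_rhs => rw [Finset.sum_range_succ']
  have h0 : 0 ≤ x ^ 0 * y ^ (n + 1 - 0) * ((n + 1).choose 0 : ℝ) := by positivity
  exact le_add_of_nonneg_right h0

theorem stmt4 (θ : ℝ) (hθ : θ ∈ Set.Icc (0:ℝ) 1) (ℓ : ℕ) (hℓ : 1 ≤ ℓ) :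
    ∑ k ∈ Finset.range ℓ,
      ((ℓ - 1).choose k : ℝ) * θ ^ k * (1 - θ) ^ (ℓ - 1 - k) *
        binKL θ (((k : ℝ) + 1) / ((ℓ : ℝ) + 1))
      ≤ 4 / (ℓ : ℝ) := by
  obtain ⟨hθ0, hθ1⟩ := hθ
  obtain ⟨n, rfl⟩ : ∃ n, ℓ = n + 1 := ⟨ℓ - 1, (Nat.succ_pred_eq_of_pos hℓ).symm⟩
  simp only [Nat.add_sub_cancel]
  push_cast
  set N : ℝ := (n : ℝ) with hN
  have hN0 : 0 ≤ N := Nat.cast_nonneg n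
  have hlog : 0 < Real.log 2 := Real.log_pos one_lt_two
  have hlog4 : 1 / 4 < Real.log 2 := by
    have := Real.log_two_gt_d9
    linarith
  have hterm : ∀ k ∈ Finset.range (n + 1),
      (n.choose k : ℝ) * θ ^ k * (1 - θ) ^ (n - k) * binKL θ (((k : ℝ) + 1) / (N + 1 + 1))
      ≤ (n.choose k : ℝ) * θ ^ k * (1 - θ) ^ (n - k) *
        ((θ ^ 2 * (N + 2) / ((k : ℝ) + 1) + (1 - θ) ^ 2 * (N + 2) / (N + 1 - (k : ℝ)) - 1)
          / Real.log 2) := by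
    intro k hk
    have hkn : (k : ℝ) ≤ N := by
      rw [hN]; exact_mod_cast Nat.lt_succ_iff.mp (Finset.mem_range.mp hk)
    have hk0 : (0:ℝ) ≤ (k : ℝ) := Nat.cast_nonneg k
    have hq0 : 0 < ((k : ℝ) + 1) / (N + 1 + 1) := by
      apply div_pos <;> linarith
    have hq1 : ((k : ℝ) + 1) / (N + 1 + 1) < 1 := by
      rw [div_lt_one (by linarith)]; linarith
    have hpmf : 0 ≤ (n.choose k : ℝ) * θ ^ k * (1 - θ) ^ (n - k) :=
      mul_nonneg (mul_nonneg (Nat.cast_nonneg _) (pow_nonneg hθ0 _))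
        (pow_nonneg (by linarith) _)
    refine mul_le_mul_of_nonneg_left ?_ hpmf
    refine (binKL_le θ _ hθ0 hθ1 hq0 hq1).trans_eq ?_
    have h1 : θ ^ 2 / (((k : ℝ) + 1) / (N + 1 + 1)) = θ ^ 2 * (N + 2) / ((k : ℝ) + 1) := by
      rw [div_div_eq_mul_div]; ring_nf
    have h2 : (1 - θ) ^ 2 / (1 - ((k : ℝ) + 1) / (N + 1 + 1))
        = (1 - θ) ^ 2 * (N + 2) / (N + 1 - (k : ℝ)) := by
      have hne : (N + 1 + 1 : ℝ) ≠ 0 := by linarith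
      have hden : (1 : ℝ) - ((k : ℝ) + 1) / (N + 1 + 1) = (N + 1 - (k : ℝ)) / (N + 2) := by
        rw [one_sub_div hne]
        congr 1 <;> ring
      rw [hden, div_div_eq_mul_div]
    rw [h1, h2]
  refine (Finset.sum_le_sum hterm).trans ?_
  have hsplit : ∑ k ∈ Finset.range (n + 1),
      (n.choose k : ℝ) * θ ^ k * (1 - θ) ^ (n - k) *
        ((θ ^ 2 * (N + 2) / ((k : ℝ) + 1) + (1 - θ) ^ 2 * (N + 2) / (N + 1 - (k : ℝ)) - 1)
          / Real.log 2)
      = ((N + 2) * θ *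
          (∑ k ∈ Finset.range (n + 1),
            (n.choose k : ℝ) * θ ^ k * (1 - θ) ^ (n - k) * (θ / ((k : ℝ) + 1)))
        + (N + 2) * (1 - θ) *
          (∑ k ∈ Finset.range (n + 1),
            (n.choose k : ℝ) * θ ^ k * (1 - θ) ^ (n - k) * ((1 - θ) / (N + 1 - (k : ℝ))))
        - ∑ k ∈ Finset.range (n + 1), (n.choose k : ℝ) * θ ^ k * (1 - θ) ^ (n - k))
        / Real.log 2 := by
    rw [Finset.mul_sum, Finset.mul_sum, ← Finset.sum_add_distrib,
      ← Finset.sum_sub_distrib, Finset.sum_div]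
    refine Finset.sum_congr rfl fun k hk => ?_
    ring
  rw [hsplit]
  have hS1 : ∑ k ∈ Finset.range (n + 1),
      (n.choose k : ℝ) * θ ^ k * (1 - θ) ^ (n - k) * (θ / ((k : ℝ) + 1)) ≤ 1 / (N + 1) := by
    have h := L1 θ (1 - θ) hθ0 (by linarith) n
    have h1 : θ + (1 - θ) = 1 := by ring
    rw [h1, one_pow] at h
    exact h
  have hS2 : ∑ k ∈ Finset.range (n + 1),
      (n.choose k : ℝ) * θ ^ k * (1 - θ) ^ (n - k) * ((1 - θ) / (N + 1 - (k : ℝ)))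
      ≤ 1 / (N + 1) := by
    have hre : ∑ k ∈ Finset.range (n + 1),
        (n.choose k : ℝ) * θ ^ k * (1 - θ) ^ (n - k) * ((1 - θ) / (N + 1 - (k : ℝ)))
        = ∑ k ∈ Finset.range (n + 1),
          (n.choose k : ℝ) * (1 - θ) ^ k * θ ^ (n - k) * ((1 - θ) / ((k : ℝ) + 1)) := by
      rw [← Finset.sum_range_reflect
        (fun k => (n.choose k : ℝ) * (1 - θ) ^ k * θ ^ (n - k) * ((1 - θ) / ((k : ℝ) + 1)))
        (n + 1)]
      refine Finset.sum_congr rfl fun k hk => ?_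
      have hkn : k ≤ n := Nat.lt_succ_iff.mp (Finset.mem_range.mp hk)
      have h1 : n + 1 - 1 - k = n - k := by omega
      have h2 : n - (n - k) = k := by omega
      have h3 : ((n - k : ℕ) : ℝ) = N - (k : ℝ) := by
        rw [Nat.cast_sub hkn]
      simp only [h1, h2, h3]
      rw [Nat.choose_symm hkn]
      have h5 : N - (k : ℝ) + 1 = N + 1 - (k : ℝ) := by ring
      rw [h5]
      ring
    rw [hre]
    have h := L1 (1 - θ) θ (by linarith) hθ0 n
    have h1 : (1 - θ) + θ = 1 := by ring
    rw [h1, one_pow] at h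
    exact h
  have hS3 : ∑ k ∈ Finset.range (n + 1),
      (n.choose k : ℝ) * θ ^ k * (1 - θ) ^ (n - k) = 1 := by
    have h1 : θ + (1 - θ) = 1 := by ring
    calc ∑ k ∈ Finset.range (n + 1), (n.choose k : ℝ) * θ ^ k * (1 - θ) ^ (n - k)
        = ∑ k ∈ Finset.range (n + 1), θ ^ k * (1 - θ) ^ (n - k) * (n.choose k : ℝ) :=
          Finset.sum_congr rfl fun k _ => by ring
      _ = (θ + (1 - θ)) ^ n := (add_pow θ (1 - θ) n).symm
      _ = 1 := by rw [h1, one_pow]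
  rw [hS3]
  set S1 := ∑ k ∈ Finset.range (n + 1),
      (n.choose k : ℝ) * θ ^ k * (1 - θ) ^ (n - k) * (θ / ((k : ℝ) + 1)) with hS1d
  set S2 := ∑ k ∈ Finset.range (n + 1),
      (n.choose k : ℝ) * θ ^ k * (1 - θ) ^ (n - k) * ((1 - θ) / (N + 1 - (k : ℝ))) with hS2d
  have hN1 : (0:ℝ) < N + 1 := by linarith
  rw [div_le_iff₀ hlog]
  have key : (N + 2) * θ * S1 + (N + 2) * (1 - θ) * S2 - 1 ≤ 1 / (N + 1) := by
    have hc1 : (N + 2) * θ * S1 ≤ (N + 2) * θ * (1 / (N + 1)) := by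
      exact mul_le_mul_of_nonneg_left hS1 (mul_nonneg (by linarith) hθ0)
    have hc2 : (N + 2) * (1 - θ) * S2 ≤ (N + 2) * (1 - θ) * (1 / (N + 1)) := by
      exact mul_le_mul_of_nonneg_left hS2 (mul_nonneg (by linarith) (by linarith))
    have : (N + 2) * θ * (1 / (N + 1)) + (N + 2) * (1 - θ) * (1 / (N + 1))
        = (N + 2) / (N + 1) := by field_simp; ring
    have hfin : (N + 2) / (N + 1) - 1 = 1 / (N + 1) := by field_simp; norm_num
    linarith
  have hlast : 1 / (N + 1) ≤ 4 / (N + 1) * Real.log 2 := by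
    have h := (div_le_div_iff_of_pos_right hN1).mpr (show (1:ℝ) ≤ 4 * Real.log 2 by linarith)
    calc 1 / (N + 1) ≤ (4 * Real.log 2) / (N + 1) := h
      _ = 4 / (N + 1) * Real.log 2 := by ring
  linarith
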